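/- For every integer σ ≥ 2, the set P_σ of potential signatures for genus σ is finite. -/

import Mathlib

/-- The Riemann–Hurwitz formula `σ - 1 = N (h - 1 + (1/2) Σ (1 - 1/mᵢ))`
as an equality of rational numbers. -/
def RHFormula (σ N h : ℕ) (m : List ℕ) : Prop :=
  (σ : ℚ) - 1 = (N : ℚ) * ((h : ℚ) - 1 + (1 / 2) * (m.map (fun x => 1 - 1 / (x : ℚ))).sum)

/-- `(h; m₁, …, m_r)` is a potential signature for genus `σ`: each `mᵢ ≥ 2` and there is
a positive integer `N` with `mᵢ ∣ N` for all `i` satisfying the Riemann–Hurwitz formula. -/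
def IsPotentialSignature (σ h : ℕ) (m : List ℕ) : Prop :=
  (∀ x ∈ m, 2 ≤ x) ∧ ∃ N : ℕ, 0 < N ∧ (∀ x ∈ m, x ∣ N) ∧ RHFormula σ N h m

/-- The set `P_σ` of potential signatures for genus `σ`, as a set of pairs `(h, [m₁, …, m_r])`. -/
def PotSig (σ : ℕ) : Set (ℕ × List ℕ) := {p | IsPotentialSignature σ p.1 p.2}

/-! ### Auxiliary material -/

namespace PotSigAux

/-- The canonical branching sum. -/
def S (m : List ℕ) : ℚ := (m.map (fun x : ℕ => 1 - 1/(x:ℚ))).sum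

lemma sum_norm (m : List ℕ) : (m.map (fun x => 1 - 1/(x:ℚ))).sum = S m := by
  simp only [S, bind_pure_comp, List.map_eq_map, List.map_map]
  rfl

lemma S_nil : S [] = 0 := by simp [S]

lemma S_cons (a : ℕ) (l : List ℕ) : S (a :: l) = (1 - 1/(a:ℚ)) + S l := by
  simp [S]

lemma S_append (s t : List ℕ) : S (s ++ t) = S s + S t := by
  simp [S]

lemma inv_le_aux {x : ℕ} {q : ℚ} (hq : 0 < q) (h : q ≤ (x:ℚ)) : 1/(x:ℚ) ≤ 1/q :=
  one_div_le_one_div_of_le hq h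

lemma sum_bounds (m : List ℕ) (h2 : ∀ x ∈ m, 2 ≤ x) :
    (m.length : ℚ)/2 ≤ S m ∧ S m ≤ (m.length : ℚ) := by
  induction m with
  | nil => simp [S_nil]
  | cons a l ih =>
    have ha : 2 ≤ a := h2 a (List.mem_cons_self (a := a) (l := l))
    obtain ⟨ih1, ih2⟩ := ih (fun x hx => h2 x (List.mem_cons_of_mem _ hx))
    have h1 : 1/(a:ℚ) ≤ 1/2 := inv_le_aux (by norm_num) (by exact_mod_cast ha)
    have ha0 : (0:ℚ) < a := by exact_mod_cast Nat.lt_of_lt_of_le two_pos ha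
    have h0 : (0:ℚ) < 1/(a:ℚ) := by positivity
    have hlen : (((a :: l).length : ℕ) : ℚ) = (l.length : ℚ) + 1 := by
      simp [List.length_cons]
    rw [hlen, S_cons]
    constructor <;> linarith

lemma sum_all_two (m : List ℕ) (h2 : ∀ x ∈ m, x = 2) : S m = (m.length : ℚ)/2 := by
  induction m with
  | nil => simp [S_nil]
  | cons a l ih =>
    have ha : a = 2 := h2 a (List.mem_cons_self (a := a) (l := l))
    have ihl := ih (fun x hx => h2 x (List.mem_cons_of_mem _ hx))
    have hlen : (((a :: l).length : ℕ) : ℚ) = (l.length : ℚ) + 1 := by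
      simp [List.length_cons]
    rw [hlen, S_cons, ihl, ha]
    norm_num
    ring

lemma tri_sorted (a b c : ℕ) (ha : 2 ≤ a) (hab : a ≤ b) (hbc : b ≤ c)
    (h : (1:ℚ)/a + 1/b + 1/c < 1) : (1:ℚ)/a + 1/b + 1/c ≤ 41/42 := by
  have hb : 2 ≤ b := ha.trans hab
  have hc : 2 ≤ c := hb.trans hbc
  have hc0 : (0:ℚ) < c := by exact_mod_cast Nat.lt_of_lt_of_le two_pos hc
  have hb0 : (0:ℚ) < b := by exact_mod_cast Nat.lt_of_lt_of_le two_pos hb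
  have hcb : (1:ℚ)/c ≤ 1/b := inv_le_aux hb0 (by exact_mod_cast hbc)
  by_cases ha4 : 4 ≤ a
  · have h1 : (1:ℚ)/a ≤ 1/4 := inv_le_aux (by norm_num) (by exact_mod_cast ha4)
    have h2 : (1:ℚ)/b ≤ 1/4 := inv_le_aux (by norm_num) (by exact_mod_cast ha4.trans hab)
    have h3 : (1:ℚ)/c ≤ 1/4 := inv_le_aux (by norm_num) (by exact_mod_cast (ha4.trans hab).trans hbc)
    linarith
  · push_neg at ha4
    have ha3 : a ≤ 3 := by omega
    interval_cases a
    · -- a = 2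
      by_cases hb5 : 5 ≤ b
      · have h2 : (1:ℚ)/b ≤ 1/5 := inv_le_aux (by norm_num) (by exact_mod_cast hb5)
        have h3 : (1:ℚ)/c ≤ 1/5 := inv_le_aux (by norm_num) (by exact_mod_cast hb5.trans hbc)
        push_cast at h ⊢
        linarith
      · push_neg at hb5
        have hb4 : b ≤ 4 := by omega
        interval_cases b
        · -- b = 2 : contradiction
          exfalso
          have h0 : (0:ℚ) < 1/c := by positivity
          push_cast at h
          linarith
        · -- b = 3
          have hc' : (1:ℚ)/c < 1/6 := by push_cast at h; linarith
          have h6 : (6:ℚ) < c := (one_div_lt_one_div hc0 (by norm_num)).mp hc'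
          have h7 : 7 ≤ c := by exact_mod_cast h6
          have h3 : (1:ℚ)/c ≤ 1/7 := inv_le_aux (by norm_num) (by exact_mod_cast h7)
          push_cast
          linarith
        · -- b = 4
          have hc' : (1:ℚ)/c < 1/4 := by push_cast at h; linarith
          have h6 : (4:ℚ) < c := (one_div_lt_one_div hc0 (by norm_num)).mp hc'
          have h7 : 5 ≤ c := by exact_mod_cast h6
          have h3 : (1:ℚ)/c ≤ 1/5 := inv_le_aux (by norm_num) (by exact_mod_cast h7)
          push_cast
          linarith
    · -- a = 3
      by_cases hb4 : 4 ≤ b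
      · have h2 : (1:ℚ)/b ≤ 1/4 := inv_le_aux (by norm_num) (by exact_mod_cast hb4)
        have h3 : (1:ℚ)/c ≤ 1/4 := inv_le_aux (by norm_num) (by exact_mod_cast hb4.trans hbc)
        push_cast
        linarith
      · push_neg at hb4
        have hb3 : b = 3 := by omega
        subst hb3
        have hc' : (1:ℚ)/c < 1/3 := by push_cast at h; linarith
        have h6 : (3:ℚ) < c := (one_div_lt_one_div hc0 (by norm_num)).mp hc'
        have h7 : 4 ≤ c := by exact_mod_cast h6
        have h3 : (1:ℚ)/c ≤ 1/4 := inv_le_aux (by norm_num) (by exact_mod_cast h7)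
        push_cast
        linarith

lemma tri (a b c : ℕ) (ha : 2 ≤ a) (hb : 2 ≤ b) (hc : 2 ≤ c)
    (h : (1:ℚ)/a + 1/b + 1/c < 1) : (1:ℚ)/a + 1/b + 1/c ≤ 41/42 := by
  rcases le_total a b with h1 | h1 <;> rcases le_total b c with h2 | h2 <;>
    rcases le_total a c with h3 | h3
  · linarith [tri_sorted a b c ha h1 h2 (by linarith)]
  · linarith [tri_sorted a b c ha h1 h2 (by linarith)]
  · linarith [tri_sorted a c b ha h3 (by omega) (by linarith)]
  · linarith [tri_sorted c a b hc h3 h1 (by linarith)]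
  · linarith [tri_sorted b a c hb h1 h3 (by linarith)]
  · linarith [tri_sorted b c a hb h2 (by omega) (by linarith)]
  · linarith [tri_sorted b a c hb h1 h3 (by linarith)]
  · linarith [tri_sorted c b a hc h2 h1 (by linarith)]

/-- The key lower bound: any positive value of `h - 1 + S/2` is at least `1/84`. -/
lemma bracket_lb (h : ℕ) (m : List ℕ) (h2 : ∀ x ∈ m, 2 ≤ x)
    (hpos : 0 < (h:ℚ) - 1 + (1/2) * S m) :
    1/84 ≤ (h:ℚ) - 1 + (1/2) * S m := by
  obtain ⟨hS1, hS2⟩ := sum_bounds m h2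
  match h with
  | (h+2) =>
    have : ((h+2:ℕ):ℚ) = (h:ℚ) + 2 := by push_cast; ring
    rw [this]
    have : (0:ℚ) ≤ h := by positivity
    linarith
  | 1 =>
    -- B = S/2 > 0, so m is nonempty and S ≥ 1/2
    rcases m with _ | ⟨a, l⟩
    · simp [S_nil] at hpos
    · have hlen : (1:ℚ) ≤ ((a :: l).length : ℚ) := by
        have : 1 ≤ (a :: l).length := by simp
        exact_mod_cast this
      push_cast
      linarith
  | 0 =>
    push_cast at hpos ⊢
    by_cases hr5 : 5 ≤ m.length
    · have : (5:ℚ) ≤ (m.length : ℚ) := by exact_mod_cast hr5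
      linarith
    · push_neg at hr5
      have hr3 : 3 ≤ m.length := by
        by_contra hcon
        push_neg at hcon
        have : (m.length : ℚ) ≤ 2 := by exact_mod_cast Nat.lt_succ_iff.mp hcon
        linarith
      rcases (by omega : m.length = 3 ∨ m.length = 4) with h3 | h4
      · -- r = 3
        obtain ⟨a, b, c, rfl⟩ := List.length_eq_three.mp h3
        have ha : 2 ≤ a := h2 a (by simp)
        have hb : 2 ≤ b := h2 b (by simp)
        have hc : 2 ≤ c := h2 c (by simp)
        have hSeq : S [a, b, c] = (1 - 1/(a:ℚ)) + ((1 - 1/(b:ℚ)) + ((1 - 1/(c:ℚ)) + 0)) := by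
          rw [S_cons, S_cons, S_cons, S_nil]
        rw [hSeq] at hpos ⊢
        have htri := tri a b c ha hb hc (by linarith)
        linarith
      · -- r = 4
        have hex : ∃ x ∈ m, 3 ≤ x := by
          by_contra hno
          push_neg at hno
          have hall : ∀ x ∈ m, x = 2 := by
            intro x hx
            have := h2 x hx
            have := hno x hx
            omega
          have := sum_all_two m hall
          rw [this, h4] at hpos
          norm_num at hpos
        obtain ⟨x, hxm, hx3⟩ := hex
        obtain ⟨s, t, rfl⟩ := List.append_of_mem hxm
        have hx0 : (0:ℚ) < x := by exact_mod_cast Nat.lt_of_lt_of_le two_pos (h2 x hxm)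
        have hxinv : 1/(x:ℚ) ≤ 1/3 := inv_le_aux (by norm_num) (by exact_mod_cast hx3)
        have hs := (sum_bounds s (fun y hy => h2 y (by simp [hy]))).1
        have ht := (sum_bounds t (fun y hy => h2 y (by simp [hy]))).1
        have hlen : s.length + 1 + t.length = 4 := by
          have := h4
          simp only [List.length_append, List.length_cons] at this
          omega
        have hlenQ : (s.length : ℚ) + (t.length : ℚ) = 3 := by
          have : s.length + t.length = 3 := by omega
          exact_mod_cast this
        have hSeq : S (s ++ x :: t) = S s + ((1 - 1/(x:ℚ)) + S t) := by
          rw [S_append, S_cons]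
        rw [hSeq] at hpos ⊢
        linarith

lemma finite_lists (L M : ℕ) : {l : List ℕ | l.length ≤ L ∧ ∀ x ∈ l, x < M}.Finite := by
  have h1 : {l : List (Fin M) | l.length ≤ L}.Finite := List.finite_length_le _ L
  apply (h1.image (List.map Fin.val)).subset
  rintro l ⟨hl, hb⟩
  refine ⟨l.attach.map (fun x => (⟨x.1, hb x.1 x.2⟩ : Fin M)), by simpa using hl, ?_⟩
  simp [List.map_map]

end PotSigAux

open PotSigAux in
/-- For every `σ ≥ 2`, the set `P_σ` of potential signatures is finite. -/
theorem potSig_finite (σ : ℕ) (hσ : 2 ≤ σ) : (PotSig σ).Finite := by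
  apply Set.Finite.subset
    (Set.Finite.prod (Set.finite_Iic σ) (finite_lists (4*σ) (84*σ+1)))
  rintro ⟨h, m⟩ ⟨h2, N, hN, hdvd, hRH⟩
  unfold RHFormula at hRH
  rw [sum_norm] at hRH
  set B : ℚ := (h:ℚ) - 1 + (1/2) * S m with hB
  clear_value B
  have hσ1 : (1:ℚ) ≤ (σ:ℚ) - 1 := by
    have : (2:ℚ) ≤ (σ:ℚ) := by exact_mod_cast hσ
    linarith
  have hN1 : (1:ℚ) ≤ (N:ℚ) := by exact_mod_cast hN
  have hBpos : 0 < B := by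
    by_contra hb
    push_neg at hb
    have : (N:ℚ) * B ≤ 0 := mul_nonpos_of_nonneg_of_nonpos (by positivity) hb
    linarith
  have hB84 : 1/84 ≤ B := by
    rw [hB]
    exact bracket_lb h m h2 (by rw [← hB]; exact hBpos)
  have hmul : (N:ℚ) * (1/84) ≤ (N:ℚ) * B :=
    mul_le_mul_of_nonneg_left hB84 (by positivity)
  have hNle : (N:ℚ) ≤ 84 * (σ:ℚ) := by linarith
  have hBle : B ≤ (σ:ℚ) - 1 := by
    have : (1:ℚ) * B ≤ (N:ℚ) * B := mul_le_mul_of_nonneg_right hN1 (le_of_lt hBpos)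
    linarith
  obtain ⟨hS1, hS2⟩ := sum_bounds m h2
  constructor
  · -- h ≤ σ
    have : (h:ℚ) ≤ (σ:ℚ) := by
      have hS0 : (0:ℚ) ≤ S m := le_trans (by positivity) hS1
      linarith [hB]
    simpa [Set.mem_Iic] using (by exact_mod_cast this : h ≤ σ)
  · refine ⟨?_, ?_⟩
    · -- length ≤ 4σ
      have : (m.length : ℚ) ≤ 4 * (σ:ℚ) := by linarith [hB]
      exact_mod_cast this
    · -- entries bounded
      intro x hx
      have hxN : x ≤ N := Nat.le_of_dvd hN (hdvd x hx)
      have : (x:ℚ) ≤ 84 * (σ:ℚ) := le_trans (by exact_mod_cast hxN) hNle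
      have : x ≤ 84 * σ := by exact_mod_cast this
      omega
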